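/- arXiv:1202.0964 — 4 statements merged into one kernel-verified Lean document; each statement's English description precedes it below -/
import Mathlib

section
/- Let G be a simple graph of order n ≥ 2. Then q₂(G) = n − 2 if and only if the complement of G has a balanced bipartite component or at least two bipartite components. -/
open Matrix SimpleGraph
open scoped Classical

/-- The `k`-th largest eigenvalue (1-indexed, counted with multiplicity) of a real
symmetric (Hermitian) matrix; junk value `0` if `M` is not Hermitian or `k` is out of range. -/
noncomputable def kthEig {V : Type*} [Fintype V] [DecidableEq V]
    (M : Matrix V V ℝ) (k : ℕ) : ℝ :=
  if hM : M.IsHermitian then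
    if h : k - 1 < Fintype.card V then
      letI f : Fin (Fintype.card V) → ℝ := hM.eigenvalues ∘ (Fintype.equivFin V).symm
      (f ∘ Tuple.sort f) (Fin.rev ⟨k - 1, h⟩)
    else 0
  else 0

/-- The signless Laplacian `Q(G) = D(G) + A(G)` of a simple graph `G`. -/
noncomputable def signlessLap {V : Type*} [Fintype V] [DecidableEq V]
    (G : SimpleGraph V) [DecidableRel G.Adj] : Matrix V V ℝ :=
  G.degMatrix ℝ + G.adjMatrix ℝ

/-- `qEig G k` is the `k`-th largest signless Laplacian eigenvalue `q_k(G)`. -/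
noncomputable def qEig {V : Type*} [Fintype V] [DecidableEq V]
    (G : SimpleGraph V) [DecidableRel G.Adj] (k : ℕ) : ℝ :=
  kthEig (signlessLap G) k

/-- `c` is a bipartite connected component of `H`: the vertex set of the component splits
into two disjoint classes `U`, `W` such that every edge of the component joins `U` and `W`. -/
def IsBipartiteComponent {V : Type*} (H : SimpleGraph V) (c : H.ConnectedComponent) : Prop :=
  ∃ U W : Set V, U ∪ W = c.supp ∧ Disjoint U W ∧
    ∀ ⦃u v : V⦄, u ∈ c.supp → H.Adj u v → (u ∈ U ∧ v ∈ W) ∨ (u ∈ W ∧ v ∈ U)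

/-- `c` is a balanced bipartite connected component of `H`: bipartite with vertex classes
of equal size. -/
def IsBalancedBipartiteComponent {V : Type*} (H : SimpleGraph V)
    (c : H.ConnectedComponent) : Prop :=
  ∃ U W : Set V, U ∪ W = c.supp ∧ Disjoint U W ∧ U.ncard = W.ncard ∧
    ∀ ⦃u v : V⦄, u ∈ c.supp → H.Adj u v → (u ∈ U ∧ v ∈ W) ∨ (u ∈ W ∧ v ∈ U)

/-- `G` is the complete multipartite graph whose parts are the fibers of `p`:
two vertices are adjacent iff they lie in different parts. -/
def IsCompleteMultipartiteWith {V ι : Type*} (G : SimpleGraph V) (p : V → ι) : Prop :=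
  ∀ u v : V, G.Adj u v ↔ p u ≠ p v


namespace Q2Aux

open Finset
open scoped RealInnerProductSpace

set_option linter.unusedSectionVars false
set_option maxHeartbeats 1000000

variable {V : Type*} [Fintype V] [DecidableEq V]

/-! ### kthEig basics -/

lemma kthEig_def (M : Matrix V V ℝ) (hM : M.IsHermitian) (k : ℕ) (h : k - 1 < Fintype.card V) :
    kthEig M k =
      letI f : Fin (Fintype.card V) → ℝ := hM.eigenvalues ∘ (Fintype.equivFin V).symm
      (f ∘ Tuple.sort f) (Fin.rev ⟨k - 1, h⟩) := by
  rw [kthEig, dif_pos hM, dif_pos h]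

lemma kthEig_one_two_spec (M : Matrix V V ℝ) (hM : M.IsHermitian)
    (h2 : 2 ≤ Fintype.card V) :
    ∃ i₀ i₁ : V, i₀ ≠ i₁ ∧ hM.eigenvalues i₀ = kthEig M 1 ∧ hM.eigenvalues i₁ = kthEig M 2 ∧
      kthEig M 2 ≤ kthEig M 1 ∧ ∀ i : V, i ≠ i₀ → hM.eigenvalues i ≤ kthEig M 2 := by
  have h0 : (0:ℕ) < Fintype.card V := by omega
  have h1 : (1:ℕ) < Fintype.card V := by omega
  set m := Fintype.card V with hm
  set e := Fintype.equivFin V with he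
  set f : Fin m → ℝ := hM.eigenvalues ∘ e.symm with hf
  have hk1 : kthEig M 1 = (f ∘ Tuple.sort f) (Fin.rev ⟨0, h0⟩) := kthEig_def M hM 1 h0
  have hk2 : kthEig M 2 = (f ∘ Tuple.sort f) (Fin.rev ⟨1, h1⟩) := kthEig_def M hM 2 h1
  set j₀ : Fin m := Fin.rev ⟨0, h0⟩ with hj0
  set j₁ : Fin m := Fin.rev ⟨1, h1⟩ with hj1
  have hj0v : (j₀ : ℕ) = m - 1 := by simp [hj0, Fin.rev]
  have hj1v : (j₁ : ℕ) = m - 2 := by simp [hj1, Fin.rev]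
  refine ⟨e.symm (Tuple.sort f j₀), e.symm (Tuple.sort f j₁), ?_, ?_, ?_, ?_, ?_⟩
  · intro hcon
    have : j₀ = j₁ := (Tuple.sort f).injective (e.symm.injective hcon)
    have := congrArg Fin.val this
    omega
  · simp [hk1, hf]
  · simp [hk2, hf]
  · rw [hk1, hk2]
    exact Tuple.monotone_sort f (by rw [Fin.le_def]; omega)
  · intro i hi
    set j := (Tuple.sort f).symm (e i) with hj
    have hji : Tuple.sort f j = e i := (Tuple.sort f).apply_symm_apply (e i)
    have hfe : hM.eigenvalues i = (f ∘ Tuple.sort f) j := by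
      rw [Function.comp_apply, hji, hf, Function.comp_apply, Equiv.symm_apply_apply]
    have hjne : j ≠ j₀ := by
      intro hcon
      apply hi
      rw [← hcon] at *
      have : e.symm (Tuple.sort f j) = e.symm (e i) := by rw [hji]
      simpa using this.symm
    have hjle : j ≤ j₁ := by
      rw [Fin.le_def, hj1v]
      have : (j : ℕ) ≠ (j₀ : ℕ) := fun h => hjne (Fin.ext h)
      have := j.isLt
      omega
    rw [hfe, hk2]
    exact Tuple.monotone_sort f hjle

/-! ### Euclidean / dotProduct bridge -/

lemma inner_eq_dot (x y : EuclideanSpace ℝ V) : ⟪x, y⟫ = (x : V → ℝ) ⬝ᵥ (y : V → ℝ) := by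
  simp [PiLp.inner_apply, dotProduct, RCLike.inner_apply, mul_comm]

lemma symm_dot (M : Matrix V V ℝ) (hM : M.IsHermitian) (x y : V → ℝ) :
    (M *ᵥ x) ⬝ᵥ y = x ⬝ᵥ (M *ᵥ y) := by
  rw [Matrix.dotProduct_mulVec, ← Matrix.vecMul_transpose,
    ← Matrix.conjTranspose_eq_transpose_of_trivial, hM.eq]

lemma dot_self_eq_sum (b : OrthonormalBasis V ℝ (EuclideanSpace ℝ V)) (v : V → ℝ) :
    v ⬝ᵥ v = ∑ i, ((b i : V → ℝ) ⬝ᵥ v)^2 := by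
  have h := b.sum_inner_mul_inner (WithLp.toLp 2 v : EuclideanSpace ℝ V) (WithLp.toLp 2 v : EuclideanSpace ℝ V)
  rw [inner_eq_dot] at h
  simp only [WithLp.ofLp_toLp] at h
  rw [← h]
  congr 1; ext i
  rw [inner_eq_dot, inner_eq_dot]
  simp only [WithLp.ofLp_toLp]
  rw [dotProduct_comm v, sq]

lemma quad_eq_sum (M : Matrix V V ℝ) (hM : M.IsHermitian) (v : V → ℝ) :
    v ⬝ᵥ (M *ᵥ v) = ∑ i, hM.eigenvalues i * ((hM.eigenvectorBasis i : V → ℝ) ⬝ᵥ v)^2 := by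
  have h := (hM.eigenvectorBasis).sum_inner_mul_inner (WithLp.toLp 2 v : EuclideanSpace ℝ V)
    (WithLp.toLp 2 (M *ᵥ v : V → ℝ) : EuclideanSpace ℝ V)
  rw [inner_eq_dot] at h
  simp only [WithLp.ofLp_toLp] at h
  rw [← h]
  congr 1; ext i
  rw [inner_eq_dot, inner_eq_dot]
  simp only [WithLp.ofLp_toLp]
  have : (hM.eigenvectorBasis i : V → ℝ) ⬝ᵥ (M *ᵥ v) =
      (M *ᵥ (hM.eigenvectorBasis i : V → ℝ)) ⬝ᵥ v := (symm_dot M hM _ v).symm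
  rw [this,
    show M *ᵥ (hM.eigenvectorBasis i : V → ℝ) = hM.eigenvalues i • (hM.eigenvectorBasis i : V → ℝ)
      from hM.mulVec_eigenvectorBasis i, smul_dotProduct, dotProduct_comm v, sq]
  rw [smul_eq_mul]; ring

lemma kthEig_exists_pair (M : Matrix V V ℝ) (hM : M.IsHermitian) (h2 : 2 ≤ Fintype.card V) :
    ∃ v₁ v₂ : V → ℝ, M *ᵥ v₁ = kthEig M 1 • v₁ ∧ M *ᵥ v₂ = kthEig M 2 • v₂ ∧
      v₁ ⬝ᵥ v₁ = 1 ∧ v₂ ⬝ᵥ v₂ = 1 ∧ v₁ ⬝ᵥ v₂ = 0 ∧ kthEig M 2 ≤ kthEig M 1 := by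
  obtain ⟨i₀, i₁, hne, h1, h2', hle, -⟩ := kthEig_one_two_spec M hM h2
  have horth := orthonormal_iff_ite.mp hM.eigenvectorBasis.orthonormal
  refine ⟨hM.eigenvectorBasis i₀, hM.eigenvectorBasis i₁, ?_, ?_, ?_, ?_, ?_, hle⟩
  · rw [show (kthEig M 1) = hM.eigenvalues i₀ from h1.symm]
    exact hM.mulVec_eigenvectorBasis i₀
  · rw [show (kthEig M 2) = hM.eigenvalues i₁ from h2'.symm]
    exact hM.mulVec_eigenvectorBasis i₁
  · have := horth i₀ i₀; rw [inner_eq_dot] at this; simpa using this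
  · have := horth i₁ i₁; rw [inner_eq_dot] at this; simpa using this
  · have := horth i₀ i₁; rw [inner_eq_dot] at this; simpa [hne] using this

lemma kthEig_two_ge (M : Matrix V V ℝ) (hM : M.IsHermitian) (h2 : 2 ≤ Fintype.card V)
    (c : ℝ) (x y : V → ℝ)
    (hind : ∀ a b : ℝ, a • x + b • y = 0 → a = 0 ∧ b = 0)
    (hq : ∀ a b : ℝ, c * ((a•x+b•y) ⬝ᵥ (a•x+b•y)) ≤ (a•x+b•y) ⬝ᵥ (M *ᵥ (a•x+b•y))) :
    c ≤ kthEig M 2 := by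
  obtain ⟨i₀, i₁, hne, h1, h2', hle, hall⟩ := kthEig_one_two_spec M hM h2
  set w : V → ℝ := ⇑(hM.eigenvectorBasis i₀) with hw
  obtain ⟨a₀, b₀, hab, hdot⟩ : ∃ a₀ b₀ : ℝ, ¬(a₀ = 0 ∧ b₀ = 0) ∧
      w ⬝ᵥ (a₀ • x + b₀ • y) = 0 := by
    by_cases hx : w ⬝ᵥ x = 0
    · by_cases hy : w ⬝ᵥ y = 0
      · exact ⟨1, 0, by simp, by simp [dotProduct_add, dotProduct_smul, hx, hy]⟩
      · exact ⟨1, 0, by simp, by simp [dotProduct_add, dotProduct_smul, hx]⟩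
    · exact ⟨w ⬝ᵥ y, -(w ⬝ᵥ x), by intro h; exact hx (by simpa using h.2),
        by simp [dotProduct_add, dotProduct_smul, smul_eq_mul]; ring⟩
  set v : V → ℝ := a₀ • x + b₀ • y with hv
  have hvne : v ≠ 0 := fun h => hab (hind a₀ b₀ h)
  have hvv : 0 < v ⬝ᵥ v := by
    rcases lt_or_eq_of_le (Finset.sum_nonneg fun i _ => mul_self_nonneg (v i)) with h | h
    · exact h
    · exact absurd ((dotProduct_self_eq_zero).mp h.symm) hvne
  have hquad : v ⬝ᵥ (M *ᵥ v) ≤ kthEig M 2 * (v ⬝ᵥ v) := by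
    rw [quad_eq_sum M hM v, dot_self_eq_sum hM.eigenvectorBasis v, Finset.mul_sum]
    refine Finset.sum_le_sum fun i _ => ?_
    by_cases hi : i = i₀
    · subst hi
      rw [hdot]
      simp
    · exact mul_le_mul_of_nonneg_right (hall i hi) (sq_nonneg _)
  have := le_trans (hq a₀ b₀) hquad
  exact le_of_mul_le_mul_right (by rw [mul_comm c, mul_comm (kthEig M 2)] at this ⊢; exact this) hvv

/-! ### signless Laplacian quadratic form -/

lemma signlessLap_isHermitian (G : SimpleGraph V) [DecidableRel G.Adj] :
    (signlessLap G).IsHermitian := by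
  rw [Matrix.IsHermitian, Matrix.conjTranspose_eq_transpose_of_trivial]
  exact ((isSymm_degMatrix (G := G) (R := ℝ)).add (isSymm_adjMatrix (G := G) (α := ℝ)))

lemma signlessLap_quad (G : SimpleGraph V) [DecidableRel G.Adj] (x : V → ℝ) :
    x ⬝ᵥ (signlessLap G *ᵥ x) =
      (∑ i : V, ∑ j : V, if G.Adj i j then (x i + x j)^2 else 0) / 2 := by
  simp_rw [signlessLap, Matrix.add_mulVec, dotProduct_add, dotProduct_mulVec_degMatrix,
    dotProduct_mulVec_adjMatrix, ← sum_add_distrib, degree_eq_sum_if_adj, sum_mul, ite_mul, one_mul,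
    zero_mul, ← sum_add_distrib, ite_add_ite, add_zero]
  rw [← add_self_div_two (∑ x_1 : V, ∑ x_2 : V, _)]
  conv_lhs => enter [1,2,2,i,2,j]; rw [if_congr (adj_comm G i j) rfl rfl]
  conv_lhs => enter [1,2]; rw [Finset.sum_comm]
  simp_rw [← sum_add_distrib, ite_add_ite]
  congr 2 with i
  congr 2 with j
  ring_nf

lemma signlessLap_quad_nonneg (G : SimpleGraph V) [DecidableRel G.Adj] (x : V → ℝ) :
    0 ≤ x ⬝ᵥ (signlessLap G *ᵥ x) := by
  rw [signlessLap_quad]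
  positivity

lemma signlessLap_quad_eq_zero (G : SimpleGraph V) [DecidableRel G.Adj] (x : V → ℝ)
    (h : x ⬝ᵥ (signlessLap G *ᵥ x) = 0) : ∀ i j : V, G.Adj i j → x j = -x i := by
  rw [signlessLap_quad] at h
  have h2 : ∀ i ∈ Finset.univ, (0:ℝ) ≤ ∑ j : V, if G.Adj i j then (x i + x j)^2 else 0 :=
    fun i _ => Finset.sum_nonneg fun j _ => by positivity
  rw [div_eq_zero_iff] at h
  rcases h with h | h
  · intro i j hadj
    have hi := (Finset.sum_eq_zero_iff_of_nonneg h2).mp h i (mem_univ i)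
    have hj := (Finset.sum_eq_zero_iff_of_nonneg (fun j _ => by positivity)).mp hi j (mem_univ j)
    rw [if_pos hadj] at hj
    have := sq_eq_zero_iff.mp hj
    linarith
  · norm_num at h

lemma signlessLap_mulVec_eq_zero (G : SimpleGraph V) [DecidableRel G.Adj] (x : V → ℝ)
    (h : ∀ i j : V, G.Adj i j → x j = -x i) : signlessLap G *ᵥ x = 0 := by
  ext v
  simp only [signlessLap, Matrix.add_mulVec, Pi.add_apply, degMatrix_mulVec_apply,
    adjMatrix_mulVec_apply, Pi.zero_apply]
  have : ∑ u ∈ G.neighborFinset v, x u = ∑ u ∈ G.neighborFinset v, (-x v) := by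
    apply Finset.sum_congr rfl
    intro u hu
    exact h v u ((mem_neighborFinset G v u).mp hu)
  rw [this, Finset.sum_const, card_neighborFinset_eq_degree, nsmul_eq_mul]
  ring

lemma signlessLap_add_compl (G : SimpleGraph V) [DecidableRel G.Adj] (x : V → ℝ) :
    x ⬝ᵥ (signlessLap G *ᵥ x) + x ⬝ᵥ (signlessLap Gᶜ *ᵥ x) =
      ((Fintype.card V : ℝ) - 2) * (x ⬝ᵥ x) + (∑ i : V, x i)^2 := by
  have key : ∀ v : V, ((signlessLap G *ᵥ x) v) + ((signlessLap Gᶜ *ᵥ x) v) =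
      ((Fintype.card V : ℝ) - 2) * x v + ∑ i : V, x i := by
    intro v
    simp only [signlessLap, Matrix.add_mulVec, Pi.add_apply, degMatrix_mulVec_apply,
      adjMatrix_mulVec_apply]
    have hdeg : (Gᶜ.degree v : ℝ) = (Fintype.card V : ℝ) - 1 - G.degree v := by
      rw [degree_compl]
      have h1 : G.degree v ≤ Fintype.card V - 1 := by
        have := G.degree_lt_card_verts v; omega
      have h2 : (1:ℕ) ≤ Fintype.card V := Fintype.card_pos_iff.mpr ⟨v⟩
      push_cast [Nat.cast_sub h1, Nat.cast_sub h2]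
      ring
    have hcompl : ∑ u ∈ (G.neighborFinset v)ᶜ, x u =
        (∑ i : V, x i) - ∑ u ∈ G.neighborFinset v, x u := by
      have := Finset.sum_compl_add_sum (G.neighborFinset v) x
      linarith
    have hnbr : ∑ u ∈ Gᶜ.neighborFinset v, x u =
        (∑ i : V, x i) - x v - ∑ u ∈ G.neighborFinset v, x u := by
      have hv : v ∈ (G.neighborFinset v)ᶜ := by simp
      rw [neighborFinset_compl,
        Finset.sum_sdiff_eq_sub (Finset.singleton_subset_iff.mpr hv), Finset.sum_singleton, hcompl]
      ring
    rw [hnbr, hdeg]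
    ring
  calc x ⬝ᵥ (signlessLap G *ᵥ x) + x ⬝ᵥ (signlessLap Gᶜ *ᵥ x)
      = ∑ v : V, x v * (((signlessLap G *ᵥ x) v) + ((signlessLap Gᶜ *ᵥ x) v)) := by
        simp [dotProduct, mul_add, Finset.sum_add_distrib]
    _ = ∑ v : V, (((Fintype.card V : ℝ) - 2) * (x v * x v) + (∑ i : V, x i) * x v) := by
        apply Finset.sum_congr rfl
        intro v _
        rw [key v]
        ring
    _ = ((Fintype.card V : ℝ) - 2) * (x ⬝ᵥ x) + (∑ i : V, x i)^2 := by
        rw [Finset.sum_add_distrib, ← Finset.mul_sum, ← Finset.mul_sum, dotProduct, sq]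

/-! ### combinatorial part -/

lemma sum_ind (S : Set V) : ∑ v : V, (if v ∈ S then (1:ℝ) else 0) = S.ncard := by
  rw [Finset.sum_boole, Set.ncard_eq_toFinset_card']
  norm_cast
  congr 1
  ext v
  simp

lemma adj_mem_supp {H : SimpleGraph V} {c : H.ConnectedComponent} {u v : V}
    (hu : u ∈ c.supp) (h : H.Adj u v) : v ∈ c.supp := by
  rw [ConnectedComponent.mem_supp_iff] at hu ⊢
  rw [← hu]
  exact ConnectedComponent.eq.mpr (h.reachable.symm)

noncomputable def signVec (U W : Set V) : V → ℝ :=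
  fun v => if v ∈ U then 1 else if v ∈ W then -1 else 0

variable {H : SimpleGraph V}

lemma signVec_flip {c : H.ConnectedComponent} {U W : Set V}
    (hUW : U ∪ W = c.supp) (hd : Disjoint U W)
    (hedge : ∀ ⦃u v : V⦄, u ∈ c.supp → H.Adj u v → (u ∈ U ∧ v ∈ W) ∨ (u ∈ W ∧ v ∈ U)) :
    ∀ i j : V, H.Adj i j → signVec U W j = - signVec U W i := by
  intro i j h
  by_cases hi : i ∈ c.supp
  · rcases hedge hi h with ⟨hiU, hjW⟩ | ⟨hiW, hjU⟩
    · have hjU : j ∉ U := fun hj => (Set.disjoint_left.mp hd hj) hjW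
      simp [signVec, hiU, hjW, hjU]
    · have hiU : i ∉ U := fun hi' => (Set.disjoint_left.mp hd hi') hiW
      have hjW : j ∉ W := fun hj => (Set.disjoint_left.mp hd hjU) hj
      simp [signVec, hiU, hiW, hjU, hjW]
  · have hj : j ∉ c.supp := fun hj => hi (adj_mem_supp hj h.symm)
    have hiU : i ∉ U := fun h' => hi (hUW ▸ Set.mem_union_left _ h')
    have hiW : i ∉ W := fun h' => hi (hUW ▸ Set.mem_union_right _ h')
    have hjU : j ∉ U := fun h' => hj (hUW ▸ Set.mem_union_left _ h')
    have hjW : j ∉ W := fun h' => hj (hUW ▸ Set.mem_union_right _ h')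
    simp [signVec, hiU, hiW, hjU, hjW]

lemma signVec_eq_sub (U W : Set V) (hd : Disjoint U W) (v : V) :
    signVec U W v = (if v ∈ U then (1:ℝ) else 0) - (if v ∈ W then (1:ℝ) else 0) := by
  by_cases hU : v ∈ U
  · have hW : v ∉ W := fun h => (Set.disjoint_left.mp hd hU) h
    simp [signVec, hU, hW]
  · by_cases hW : v ∈ W <;> simp [signVec, hU, hW]

lemma signVec_sum (U W : Set V) (hd : Disjoint U W) :
    ∑ v : V, signVec U W v = (U.ncard : ℝ) - W.ncard := by
  rw [show ∑ v : V, signVec U W v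
      = ∑ v : V, ((if v ∈ U then (1:ℝ) else 0) - (if v ∈ W then (1:ℝ) else 0)) from
    Finset.sum_congr rfl fun v _ => signVec_eq_sub U W hd v, Finset.sum_sub_distrib,
    sum_ind, sum_ind]

lemma walk_pm (x : V → ℝ) (hx : ∀ i j : V, H.Adj i j → x j = -x i) :
    ∀ (u w : V) (p : H.Walk u w), x w = x u ∨ x w = -x u := by
  intro u w p
  induction p with
  | nil => left; rfl
  | @cons a b w₂ h p ih =>
    have hab : x b = -x a := hx a b h
    rcases ih with h1 | h1
    · right; rw [h1, hab]
    · left; rw [h1, hab]; ring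

lemma mem_supp_pm (x : V → ℝ) (hx : ∀ i j : V, H.Adj i j → x j = -x i) (v₀ : V) :
    ∀ u ∈ (H.connectedComponentMk v₀).supp, x u = x v₀ ∨ x u = -x v₀ := by
  intro u hu
  rw [ConnectedComponent.mem_supp_iff, ConnectedComponent.eq] at hu
  obtain ⟨p⟩ := hu.symm
  exact walk_pm x hx v₀ u p

lemma bip_data (x : V → ℝ) (hx : ∀ i j : V, H.Adj i j → x j = -x i) (v₀ : V)
    (h0 : x v₀ ≠ 0) :
    letI c := H.connectedComponentMk v₀
    letI U : Set V := {u | u ∈ c.supp ∧ x u = x v₀}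
    letI W : Set V := {u | u ∈ c.supp ∧ x u = -x v₀}
    U ∪ W = c.supp ∧ Disjoint U W ∧
      (∀ ⦃u v : V⦄, u ∈ c.supp → H.Adj u v → (u ∈ U ∧ v ∈ W) ∨ (u ∈ W ∧ v ∈ U)) := by
  set c := H.connectedComponentMk v₀ with hc
  set U : Set V := {u | u ∈ c.supp ∧ x u = x v₀} with hUdef
  set W : Set V := {u | u ∈ c.supp ∧ x u = -x v₀} with hWdef
  have hUW : U ∪ W = c.supp := by
    apply Set.Subset.antisymm
    · rintro u (⟨h1, -⟩ | ⟨h1, -⟩) <;> exact h1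
    · intro u hu
      rcases mem_supp_pm x hx v₀ u hu with h | h
      · exact Set.mem_union_left _ ⟨hu, h⟩
      · exact Set.mem_union_right _ ⟨hu, h⟩
  have hd : Disjoint U W := by
    rw [Set.disjoint_left]
    rintro u ⟨-, h1⟩ ⟨-, h2⟩
    rw [h1] at h2
    exact h0 (by linarith)
  refine ⟨hUW, hd, ?_⟩
  intro u v hu hadj
  have hv : v ∈ c.supp := adj_mem_supp hu hadj
  have hflip : x v = -x u := hx u v hadj
  rcases mem_supp_pm x hx v₀ u hu with h | h
  · left
    exact ⟨⟨hu, h⟩, ⟨hv, by rw [hflip, h]⟩⟩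
  · right
    exact ⟨⟨hu, h⟩, ⟨hv, by rw [hflip, h]; ring⟩⟩

lemma forward_main (x : V → ℝ) (hx0 : x ≠ 0)
    (hx : ∀ i j : V, H.Adj i j → x j = -x i) (hsum : ∑ v : V, x v = 0) :
    (∃ c : H.ConnectedComponent, IsBalancedBipartiteComponent H c) ∨
    (∃ c₁ c₂ : H.ConnectedComponent, c₁ ≠ c₂ ∧
      IsBipartiteComponent H c₁ ∧ IsBipartiteComponent H c₂) := by
  obtain ⟨v₀, h0⟩ := Function.ne_iff.mp hx0
  have h0 : x v₀ ≠ 0 := h0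
  by_cases hsep : ∃ v₁ : V, x v₁ ≠ 0 ∧ H.connectedComponentMk v₁ ≠ H.connectedComponentMk v₀
  · obtain ⟨v₁, h1, hne⟩ := hsep
    right
    obtain ⟨hUW₀, hd₀, he₀⟩ := bip_data x hx v₀ h0
    obtain ⟨hUW₁, hd₁, he₁⟩ := bip_data x hx v₁ h1
    exact ⟨_, _, hne, ⟨_, _, hUW₁, hd₁, he₁⟩, ⟨_, _, hUW₀, hd₀, he₀⟩⟩
  · push_neg at hsep
    left
    obtain ⟨hUW, hd, he⟩ := bip_data x hx v₀ h0
    set c := H.connectedComponentMk v₀ with hc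
    set U : Set V := {u | u ∈ c.supp ∧ x u = x v₀} with hU
    set W : Set V := {u | u ∈ c.supp ∧ x u = -x v₀} with hW
    have hpt : ∀ v : V, x v = (x v₀) * signVec U W v := by
      intro v
      by_cases hvU : v ∈ U
      · rw [show signVec U W v = 1 by simp [signVec, hvU]]
        rw [hvU.2]; ring
      · by_cases hvW : v ∈ W
        · rw [show signVec U W v = -1 by simp [signVec, hvU, hvW]]
          rw [hvW.2]; ring
        · rw [show signVec U W v = 0 by simp [signVec, hvU, hvW]]
          by_contra hcon
          have hxv : x v ≠ 0 := by intro h; exact hcon (by rw [h]; ring)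
          have := hsep v hxv
          have hv : v ∈ c.supp := by rw [ConnectedComponent.mem_supp_iff]; exact this
          rw [← hUW] at hv
          rcases hv with h | h
          · exact hvU h
          · exact hvW h
    have hsum2 : (x v₀) * ((U.ncard : ℝ) - W.ncard) = 0 := by
      rw [← signVec_sum U W hd, Finset.mul_sum, ← hsum]
      exact (Finset.sum_congr rfl fun v _ => (hpt v).symm)
    have hcard : (U.ncard : ℝ) = W.ncard := by
      rcases mul_eq_zero.mp hsum2 with h | h
      · exact absurd h h0
      · linarith
    exact ⟨c, U, W, hUW, hd, Nat.cast_injective hcard, he⟩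

variable [DecidableRel H.Adj]

lemma indU_quad_bound {c : H.ConnectedComponent} {U W : Set V}
    (hUW : U ∪ W = c.supp) (hd : Disjoint U W)
    (hedge : ∀ ⦃u v : V⦄, u ∈ c.supp → H.Adj u v → (u ∈ U ∧ v ∈ W) ∨ (u ∈ W ∧ v ∈ U)) :
    (fun v => if v ∈ U then (1:ℝ) else 0) ⬝ᵥ
      (signlessLap H *ᵥ (fun v => if v ∈ U then (1:ℝ) else 0)) ≤ (U.ncard : ℝ) * W.ncard := by
  set z : V → ℝ := fun v => if v ∈ U then (1:ℝ) else 0 with hz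
  have hUsub : U ⊆ c.supp := hUW ▸ Set.subset_union_left
  have hWsub : W ⊆ c.supp := hUW ▸ Set.subset_union_right
  have inner_bd : ∀ i : V, (∑ j : V, if H.Adj i j then (z i + z j)^2 else 0) ≤
      (if i ∈ U then (W.ncard:ℝ) else 0) + (if i ∈ W then (U.ncard:ℝ) else 0) := by
    intro i
    by_cases hiU : i ∈ U
    · have hiW : i ∉ W := fun h => Set.disjoint_left.mp hd hiU h
      rw [if_pos hiU, if_neg hiW, add_zero, ← sum_ind W]
      apply Finset.sum_le_sum
      intro j _
      by_cases hadj : H.Adj i j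
      · rcases hedge (hUsub hiU) hadj with ⟨-, hjW⟩ | ⟨hiW', -⟩
        · have hjU : j ∉ U := fun h => Set.disjoint_left.mp hd h hjW
          simp [hadj, hz, hiU, hjU, hjW]
        · exact absurd hiW' hiW
      · rw [if_neg hadj]
        split <;> norm_num
    · by_cases hiW : i ∈ W
      · rw [if_neg hiU, if_pos hiW, zero_add, ← sum_ind U]
        apply Finset.sum_le_sum
        intro j _
        by_cases hadj : H.Adj i j
        · rw [if_pos hadj, show z i = 0 from if_neg hiU]
          by_cases hjU : j ∈ U
          · simp [hz, hjU]
          · rcases hedge (hWsub hiW) hadj with ⟨hiU', -⟩ | ⟨-, hjU'⟩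
            · exact absurd hiU' hiU
            · exact absurd hjU' hjU
        · rw [if_neg hadj]
          split <;> norm_num
      · rw [if_neg hiU, if_neg hiW, add_zero]
        apply Finset.sum_nonpos
        intro j _
        by_cases hadj : H.Adj i j
        · rw [if_pos hadj, show z i = 0 from if_neg hiU]
          have hjU : j ∉ U := by
            intro hjU
            rcases hedge (hUsub hjU) hadj.symm with ⟨-, hiW'⟩ | ⟨-, hiU'⟩
            · exact hiW hiW'
            · exact hiU hiU'
          rw [show z j = 0 from if_neg hjU]
          norm_num
        · rw [if_neg hadj]
  rw [signlessLap_quad]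
  have htot : (∑ i : V, ∑ j : V, if H.Adj i j then (z i + z j)^2 else 0) ≤
      2 * ((U.ncard : ℝ) * W.ncard) := by
    calc ∑ i : V, ∑ j : V, (if H.Adj i j then (z i + z j)^2 else 0)
        ≤ ∑ i : V, ((if i ∈ U then (W.ncard:ℝ) else 0) + (if i ∈ W then (U.ncard:ℝ) else 0)) :=
          Finset.sum_le_sum fun i _ => inner_bd i
      _ = (W.ncard:ℝ) * U.ncard + (U.ncard:ℝ) * W.ncard := by
          have hgen : ∀ (r : ℝ) (S : Set V), ∑ i : V, (if i ∈ S then r else 0) = r * S.ncard := by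
            intro r S
            rw [← sum_ind S, Finset.mul_sum]
            apply Finset.sum_congr rfl
            intro i _
            split <;> ring
          rw [Finset.sum_add_distrib, hgen, hgen]
      _ = 2 * ((U.ncard : ℝ) * W.ncard) := by ring
  linarith

lemma backward_balanced {c : H.ConnectedComponent} (hb : IsBalancedBipartiteComponent H c) :
    ∃ x z : V → ℝ, (∀ a b : ℝ, a • x + b • z = 0 → a = 0 ∧ b = 0) ∧
      ∀ a b : ℝ, (a•x+b•z) ⬝ᵥ (signlessLap H *ᵥ (a•x+b•z)) ≤ (∑ v : V, (a•x+b•z) v)^2 := by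
  obtain ⟨U, W, hUW, hd, hcard, hedge⟩ := hb
  set x : V → ℝ := signVec U W with hxdef
  set z : V → ℝ := fun v => if v ∈ U then (1:ℝ) else 0 with hzdef
  have hcardR : (U.ncard : ℝ) = W.ncard := by exact_mod_cast hcard
  have hQx : signlessLap H *ᵥ x = 0 :=
    signlessLap_mulVec_eq_zero H x (signVec_flip hUW hd hedge)
  have hzq : z ⬝ᵥ (signlessLap H *ᵥ z) ≤ (U.ncard : ℝ) * W.ncard :=
    indU_quad_bound hUW hd hedge
  -- nonemptiness of U and W
  obtain ⟨v₀, hv₀⟩ := c.exists_rep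
  have hv₀s : v₀ ∈ c.supp := by rw [ConnectedComponent.mem_supp_iff]; exact hv₀
  have hne : U.Nonempty ∧ W.Nonempty := by
    have hv : v₀ ∈ U ∪ W := hUW ▸ hv₀s
    have hUfin : U.Finite := Set.toFinite U
    have hWfin : W.Finite := Set.toFinite W
    rcases hv with h | h
    · have : 0 < U.ncard := (Set.ncard_pos (Set.toFinite U)).mpr ⟨v₀, h⟩
      exact ⟨⟨v₀, h⟩, Set.nonempty_of_ncard_ne_zero (by omega)⟩
    · have : 0 < W.ncard := (Set.ncard_pos (Set.toFinite W)).mpr ⟨v₀, h⟩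
      exact ⟨Set.nonempty_of_ncard_ne_zero (by rw [hcard]; omega), ⟨v₀, h⟩⟩
  obtain ⟨⟨u₀, hu₀⟩, ⟨w₀, hw₀⟩⟩ := hne
  have hu₀W : u₀ ∉ W := fun h => Set.disjoint_left.mp hd hu₀ h
  have hw₀U : w₀ ∉ U := fun h => Set.disjoint_left.mp hd h hw₀
  refine ⟨x, z, ?_, ?_⟩
  · intro a b hab
    have hw : (a • x + b • z) w₀ = -a := by
      simp [hxdef, hzdef, signVec, hw₀U, hw₀]
    have hu : (a • x + b • z) u₀ = a + b := by
      simp [hxdef, hzdef, signVec, hu₀]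
    rw [hab] at hw hu
    simp only [Pi.zero_apply] at hw hu
    constructor
    · linarith
    · linarith
  · intro a b
    have hsum_x : ∑ v : V, x v = 0 := by
      rw [hxdef, signVec_sum U W hd, hcardR]; ring
    have hsum_z : ∑ v : V, z v = (U.ncard : ℝ) := sum_ind U
    have hsum : ∑ v : V, (a • x + b • z) v = b * U.ncard := by
      simp only [Pi.add_apply, Pi.smul_apply, smul_eq_mul]
      rw [Finset.sum_add_distrib, ← Finset.mul_sum, ← Finset.mul_sum, hsum_x, hsum_z]
      ring
    have hquad : (a•x+b•z) ⬝ᵥ (signlessLap H *ᵥ (a•x+b•z)) = b^2 * (z ⬝ᵥ (signlessLap H *ᵥ z)) := by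
      rw [Matrix.mulVec_add, Matrix.mulVec_smul, Matrix.mulVec_smul, hQx, smul_zero, zero_add,
        add_dotProduct, smul_dotProduct, smul_dotProduct, dotProduct_smul, dotProduct_smul]
      have hxz : x ⬝ᵥ (signlessLap H *ᵥ z) = 0 := by
        rw [← symm_dot _ (signlessLap_isHermitian H), hQx, zero_dotProduct]
      rw [hxz]
      simp [smul_eq_mul]
      ring
    rw [hquad, hsum]
    have hb2 : (0:ℝ) ≤ b^2 := sq_nonneg b
    calc b^2 * (z ⬝ᵥ (signlessLap H *ᵥ z)) ≤ b^2 * ((U.ncard : ℝ) * W.ncard) := by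
          exact mul_le_mul_of_nonneg_left hzq hb2
      _ = (b * U.ncard)^2 := by rw [← hcardR]; ring

lemma backward_two {c₁ c₂ : H.ConnectedComponent} (hne : c₁ ≠ c₂)
    (h₁ : IsBipartiteComponent H c₁) (h₂ : IsBipartiteComponent H c₂) :
    ∃ x z : V → ℝ, (∀ a b : ℝ, a • x + b • z = 0 → a = 0 ∧ b = 0) ∧
      ∀ a b : ℝ, (a•x+b•z) ⬝ᵥ (signlessLap H *ᵥ (a•x+b•z)) ≤ (∑ v : V, (a•x+b•z) v)^2 := by
  obtain ⟨U₁, W₁, hUW₁, hd₁, hedge₁⟩ := h₁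
  obtain ⟨U₂, W₂, hUW₂, hd₂, hedge₂⟩ := h₂
  set x : V → ℝ := signVec U₁ W₁ with hxdef
  set z : V → ℝ := signVec U₂ W₂ with hzdef
  have hQx : signlessLap H *ᵥ x = 0 :=
    signlessLap_mulVec_eq_zero H x (signVec_flip hUW₁ hd₁ hedge₁)
  have hQz : signlessLap H *ᵥ z = 0 :=
    signlessLap_mulVec_eq_zero H z (signVec_flip hUW₂ hd₂ hedge₂)
  obtain ⟨v₁, hv₁⟩ := c₁.exists_rep
  obtain ⟨v₂, hv₂⟩ := c₂.exists_rep
  have hv₁s : v₁ ∈ c₁.supp := by rw [ConnectedComponent.mem_supp_iff]; exact hv₁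
  have hv₂s : v₂ ∈ c₂.supp := by rw [ConnectedComponent.mem_supp_iff]; exact hv₂
  have hv₁n : v₁ ∉ c₂.supp := by
    rw [ConnectedComponent.mem_supp_iff]
    exact fun h => hne (hv₁.symm.trans h)
  have hv₂n : v₂ ∉ c₁.supp := by
    rw [ConnectedComponent.mem_supp_iff]
    exact fun h => hne (h.symm.trans hv₂)
  have hz₁ : z v₁ = 0 := by
    have h1 : v₁ ∉ U₂ := fun h => hv₁n (hUW₂ ▸ Set.mem_union_left _ h)
    have h2 : v₁ ∉ W₂ := fun h => hv₁n (hUW₂ ▸ Set.mem_union_right _ h)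
    simp [hzdef, signVec, h1, h2]
  have hx₂ : x v₂ = 0 := by
    have h1 : v₂ ∉ U₁ := fun h => hv₂n (hUW₁ ▸ Set.mem_union_left _ h)
    have h2 : v₂ ∉ W₁ := fun h => hv₂n (hUW₁ ▸ Set.mem_union_right _ h)
    simp [hxdef, signVec, h1, h2]
  have hxpm : x v₁ = 1 ∨ x v₁ = -1 := by
    rcases (hUW₁ ▸ hv₁s : v₁ ∈ U₁ ∪ W₁) with h | h
    · left; simp [hxdef, signVec, h]
    · right
      have : v₁ ∉ U₁ := fun h' => Set.disjoint_left.mp hd₁ h' h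
      simp [hxdef, signVec, h, this]
  have hzpm : z v₂ = 1 ∨ z v₂ = -1 := by
    rcases (hUW₂ ▸ hv₂s : v₂ ∈ U₂ ∪ W₂) with h | h
    · left; simp [hzdef, signVec, h]
    · right
      have : v₂ ∉ U₂ := fun h' => Set.disjoint_left.mp hd₂ h' h
      simp [hzdef, signVec, h, this]
  refine ⟨x, z, ?_, ?_⟩
  · intro a b hab
    have h1 := congrFun hab v₁
    have h2 := congrFun hab v₂
    simp only [Pi.add_apply, Pi.smul_apply, smul_eq_mul, Pi.zero_apply, hz₁, hx₂] at h1 h2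
    constructor
    · rcases hxpm with h | h <;> rw [h] at h1 <;> linarith
    · rcases hzpm with h | h <;> rw [h] at h2 <;> linarith
  · intro a b
    have : signlessLap H *ᵥ (a • x + b • z) = 0 := by
      rw [Matrix.mulVec_add, Matrix.mulVec_smul, Matrix.mulVec_smul, hQx, hQz, smul_zero,
        smul_zero, add_zero]
    rw [this, dotProduct_zero]
    positivity

end Q2Aux

/-- If `G` is a graph of order `n ≥ 2`, then `q₂(G) = n - 2` if and only if the complement
of `G` has a balanced bipartite component or at least two bipartite components. -/
theorem q2_eq_n_sub_two_iff (n : ℕ) (hn : 2 ≤ n)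
    (G : SimpleGraph (Fin n)) [DecidableRel G.Adj] :
    qEig G 2 = (n : ℝ) - 2 ↔
      ((∃ c : Gᶜ.ConnectedComponent, IsBalancedBipartiteComponent Gᶜ c) ∨
       (∃ c₁ c₂ : Gᶜ.ConnectedComponent, c₁ ≠ c₂ ∧
          IsBipartiteComponent Gᶜ c₁ ∧ IsBipartiteComponent Gᶜ c₂)) := by
  classical
  set M : Matrix (Fin n) (Fin n) ℝ := signlessLap G with hMdef
  have hM : M.IsHermitian := Q2Aux.signlessLap_isHermitian G
  have hcard : Fintype.card (Fin n) = n := Fintype.card_fin n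
  have h2 : 2 ≤ Fintype.card (Fin n) := by rw [hcard]; exact hn
  have hqEig : qEig G 2 = kthEig M 2 := rfl
  -- identity specialized
  have hid : ∀ x : Fin n → ℝ, x ⬝ᵥ (M *ᵥ x) + x ⬝ᵥ (signlessLap Gᶜ *ᵥ x) =
      ((n : ℝ) - 2) * (x ⬝ᵥ x) + (∑ i, x i)^2 := by
    intro x
    have := Q2Aux.signlessLap_add_compl G x
    rw [hcard] at this
    exact this
  -- key vector from the top-two eigenspace, orthogonal to the all-ones vector
  have key : ∃ v : Fin n → ℝ, 0 < v ⬝ᵥ v ∧ (∑ i, v i) = 0 ∧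
      kthEig M 2 * (v ⬝ᵥ v) ≤ v ⬝ᵥ (M *ᵥ v) := by
    obtain ⟨v₁, v₂, hMv₁, hMv₂, h11, h22, h12, hord⟩ := Q2Aux.kthEig_exists_pair M hM h2
    have h21 : v₂ ⬝ᵥ v₁ = 0 := by rw [dotProduct_comm]; exact h12
    obtain ⟨a, b, hab, hsum0⟩ : ∃ a b : ℝ, ¬(a = 0 ∧ b = 0) ∧
        a * (∑ i, v₁ i) + b * (∑ i, v₂ i) = 0 := by
      by_cases hs1 : (∑ i, v₁ i) = 0
      · exact ⟨1, 0, by simp, by rw [hs1]; ring⟩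
      · exact ⟨∑ i, v₂ i, -(∑ i, v₁ i), fun h => hs1 (by simpa using h.2), by ring⟩
    refine ⟨a • v₁ + b • v₂, ?_, ?_, ?_⟩
    · have hdot : (a • v₁ + b • v₂) ⬝ᵥ (a • v₁ + b • v₂) = a^2 + b^2 := by
        simp only [add_dotProduct, dotProduct_add, smul_dotProduct, dotProduct_smul,
          smul_eq_mul, h11, h22, h12, h21]
        ring
      rw [hdot]
      rcases not_and_or.mp hab with h | h
      · have ha : 0 < a^2 := by positivity
        nlinarith [sq_nonneg b]
      · have hb : 0 < b^2 := by positivity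
        nlinarith [sq_nonneg a]
    · simp only [Pi.add_apply, Pi.smul_apply, smul_eq_mul]
      rw [Finset.sum_add_distrib, ← Finset.mul_sum, ← Finset.mul_sum]
      exact hsum0
    · have hMv : M *ᵥ (a • v₁ + b • v₂) =
          a • (kthEig M 1 • v₁) + b • (kthEig M 2 • v₂) := by
        rw [Matrix.mulVec_add, Matrix.mulVec_smul, Matrix.mulVec_smul, hMv₁, hMv₂]
      have hdot : (a • v₁ + b • v₂) ⬝ᵥ (a • v₁ + b • v₂) = a^2 + b^2 := by
        simp only [add_dotProduct, dotProduct_add, smul_dotProduct, dotProduct_smul,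
          smul_eq_mul, h11, h22, h12, h21]
        ring
      have hq : (a • v₁ + b • v₂) ⬝ᵥ (M *ᵥ (a • v₁ + b • v₂)) =
          a^2 * kthEig M 1 + b^2 * kthEig M 2 := by
        rw [hMv]
        simp only [add_dotProduct, dotProduct_add, smul_dotProduct, dotProduct_smul,
          smul_eq_mul, h11, h22, h12, h21]
        ring
      rw [hq, hdot]
      nlinarith [sq_nonneg a, sq_nonneg b, hord]
  -- the second eigenvalue is always at most n - 2
  have hle : kthEig M 2 ≤ (n : ℝ) - 2 := by
    obtain ⟨v, hvpos, hvsum, hvq⟩ := key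
    have hidv := hid v
    have hnn := Q2Aux.signlessLap_quad_nonneg Gᶜ v
    rw [hvsum] at hidv
    have : kthEig M 2 * (v ⬝ᵥ v) ≤ ((n : ℝ) - 2) * (v ⬝ᵥ v) := by nlinarith
    exact le_of_mul_le_mul_right (by linarith [this]) hvpos
  rw [hqEig]
  constructor
  · intro heq
    obtain ⟨v, hvpos, hvsum, hvq⟩ := key
    have hidv := hid v
    have hnn := Q2Aux.signlessLap_quad_nonneg Gᶜ v
    rw [hvsum] at hidv
    rw [heq] at hvq
    have hzero : v ⬝ᵥ (signlessLap Gᶜ *ᵥ v) = 0 := by nlinarith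
    have hflip : ∀ i j : Fin n, Gᶜ.Adj i j → v j = -v i :=
      Q2Aux.signlessLap_quad_eq_zero Gᶜ v hzero
    have hvne : v ≠ 0 := by
      intro h
      rw [h] at hvpos
      simp [dotProduct] at hvpos
    exact Q2Aux.forward_main v hvne hflip hvsum
  · intro hOr
    have hge : (n : ℝ) - 2 ≤ kthEig M 2 := by
      obtain ⟨x, z, hind, hqb⟩ :
          ∃ x z : Fin n → ℝ, (∀ a b : ℝ, a • x + b • z = 0 → a = 0 ∧ b = 0) ∧
            ∀ a b : ℝ, (a•x+b•z) ⬝ᵥ (signlessLap Gᶜ *ᵥ (a•x+b•z)) ≤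
              (∑ v, (a•x+b•z) v)^2 := by
        rcases hOr with ⟨c, hc⟩ | ⟨c₁, c₂, hne, h₁, h₂⟩
        · exact Q2Aux.backward_balanced hc
        · exact Q2Aux.backward_two hne h₁ h₂
      apply Q2Aux.kthEig_two_ge M hM h2 _ x z hind
      intro a b
      have hidy := hid (a • x + b • z)
      have := hqb a b
      nlinarith
    linarith
end

section
/- If G is a noncomplete simple graph of order n, then q₂(G) ≥ δ(G), where δ(G) denotes the minimum vertex degree of G. -/
open Matrix SimpleGraph
open scoped Classical

lemma signlessLap_isHermitian {W : Type*} [Fintype W] [DecidableEq W]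
    (G : SimpleGraph W) [DecidableRel G.Adj] :
    (signlessLap G).IsHermitian := by
  have h : (signlessLap G).IsSymm := (isSymm_degMatrix (R := ℝ) (G := G)).add (isSymm_adjMatrix G)
  rwa [Matrix.IsHermitian, Matrix.conjTranspose_eq_transpose_of_trivial]

lemma quad_le_of_orth {W : Type*} [Fintype W] [DecidableEq W]
    {M : Matrix W W ℝ} (hM : M.IsHermitian) (t : ℝ) (w₀ : W)
    (ht : ∀ w, w ≠ w₀ → hM.eigenvalues w ≤ t) (y : W → ℝ)
    (hy : ((hM.eigenvectorUnitary : Matrix W W ℝ)ᵀ *ᵥ y) w₀ = 0) :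
    y ⬝ᵥ (M *ᵥ y) ≤ t * (y ⬝ᵥ y) := by
  set U : Matrix W W ℝ := (hM.eigenvectorUnitary : Matrix W W ℝ) with hU
  have hstar : star U = Uᵀ := by
    rw [Matrix.star_eq_conjTranspose, Matrix.conjTranspose_eq_transpose_of_trivial]
  set c : W → ℝ := Uᵀ *ᵥ y with hcdef
  have hUU : U * Uᵀ = 1 := by
    rw [← hstar]; exact Matrix.mem_unitaryGroup_iff.mp hM.eigenvectorUnitary.2
  have hyy : c ⬝ᵥ c = y ⬝ᵥ y := by
    rw [hcdef, Matrix.dotProduct_mulVec, Matrix.vecMul_transpose, Matrix.mulVec_mulVec,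
      hUU, Matrix.one_mulVec]
  have hquad : y ⬝ᵥ (M *ᵥ y) = ∑ w, hM.eigenvalues w * (c w * c w) := by
    conv_lhs => rw [hM.spectral_theorem, Unitary.conjStarAlgAut_apply]
    rw [hstar, ← Matrix.mulVec_mulVec, ← Matrix.mulVec_mulVec, Matrix.dotProduct_mulVec,
      ← Matrix.mulVec_transpose, ← hcdef]
    simp only [dotProduct, Matrix.mulVec_diagonal, Function.comp_apply,
      RCLike.ofReal_real_eq_id, id_eq]
    exact Finset.sum_congr rfl fun w _ => by ring
  rw [hquad, ← hyy]
  have hcw0 : c w₀ = 0 := hy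
  calc ∑ w, hM.eigenvalues w * (c w * c w) ≤ ∑ w, t * (c w * c w) := by
        apply Finset.sum_le_sum
        intro w _
        by_cases hw : w = w₀
        · subst hw; rw [hcw0]; simp
        · exact mul_le_mul_of_nonneg_right (ht w hw) (mul_self_nonneg _)
    _ = t * (c ⬝ᵥ c) := by rw [dotProduct, Finset.mul_sum]

/-- If `G` is a noncomplete graph of order `n`, then `q₂(G) ≥ δ(G)`. -/
theorem q2_ge_minDegree (n : ℕ) (G : SimpleGraph (Fin n)) [DecidableRel G.Adj]
    (hG : G ≠ ⊤) :
    (G.minDegree : ℝ) ≤ qEig G 2 := by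
  obtain ⟨u, v, huv, hnadj⟩ : ∃ u v : Fin n, u ≠ v ∧ ¬ G.Adj u v := by
    by_contra h
    push_neg at h
    apply hG
    ext x z
    simp only [SimpleGraph.top_adj]
    exact ⟨fun h' => h'.ne, fun h' => h x z h'⟩
  have hM : (signlessLap G).IsHermitian := signlessLap_isHermitian G
  have hcard : 1 < Fintype.card (Fin n) := Fintype.one_lt_card_iff_nontrivial.mpr ⟨⟨u, v, huv⟩⟩
  set m := Fintype.card (Fin n) with hm
  set e := Fintype.equivFin (Fin n) with he
  set f : Fin m → ℝ := hM.eigenvalues ∘ e.symm with hf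
  have hq : qEig G 2 = (f ∘ Tuple.sort f) (Fin.rev ⟨1, hcard⟩) := by
    rw [qEig, kthEig, dif_pos hM, dif_pos (show 2 - 1 < Fintype.card (Fin n) from hcard)]
  set q2 := (f ∘ Tuple.sort f) (Fin.rev ⟨1, hcard⟩) with hq2
  set ilast : Fin m := ⟨m - 1, by omega⟩ with hilast
  set w₀ : Fin n := e.symm (Tuple.sort f ilast) with hw0
  have hbound : ∀ w : Fin n, w ≠ w₀ → hM.eigenvalues w ≤ q2 := by
    intro w hw
    have hev : hM.eigenvalues w = f (e w) := by simp [hf]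
    rw [hev]
    set i := (Tuple.sort f).symm (e w) with hi
    have hiw : Tuple.sort f i = e w := Equiv.apply_symm_apply _ _
    have hile : i ≤ Fin.rev ⟨1, hcard⟩ := by
      have hne : i ≠ ilast := by
        intro hcontra
        apply hw
        rw [hw0, ← hcontra, hiw, Equiv.symm_apply_apply]
      have h1 : i.val < m := i.isLt
      have h3 : (ilast : Fin m).val = m - 1 := rfl
      have h2 : i.val ≠ m - 1 := fun hc => hne (Fin.ext (by rw [hc, h3]))
      rw [Fin.le_def, Fin.val_rev]
      have h4 : ((⟨1, hcard⟩ : Fin m) : ℕ) = 1 := rfl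
      rw [h4]
      omega
    calc f (e w) = (f ∘ Tuple.sort f) i := by rw [Function.comp_apply, hiw]
      _ ≤ q2 := Tuple.monotone_sort f hile
  set r : Fin n → ℝ := fun x => (hM.eigenvectorUnitary : Matrix (Fin n) (Fin n) ℝ)ᵀ w₀ x with hr
  obtain ⟨a, b, horth, hpos⟩ : ∃ a b : ℝ, r u * a + r v * b = 0 ∧ 0 < a * a + b * b := by
    by_cases hcase : r u = 0 ∧ r v = 0
    · exact ⟨1, 0, by rw [hcase.1, hcase.2]; ring, by norm_num⟩
    · refine ⟨r v, -(r u), by ring, ?_⟩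
      rcases not_and_or.mp hcase with h | h
      · have : 0 < r u * r u := mul_self_pos.mpr h
        nlinarith [mul_self_nonneg (r v)]
      · have : 0 < r v * r v := mul_self_pos.mpr h
        nlinarith [mul_self_nonneg (r u)]
  set y : Fin n → ℝ := Pi.single u a + Pi.single v b with hy
  have hy0 : ((hM.eigenvectorUnitary : Matrix (Fin n) (Fin n) ℝ)ᵀ *ᵥ y) w₀ = 0 := by
    rw [hy, Matrix.mulVec_add, Matrix.mulVec_single, Matrix.mulVec_single]
    simp [hr] at horth ⊢
    linarith
  have hyy : y ⬝ᵥ y = a * a + b * b := by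
    rw [hy]
    simp [add_dotProduct, dotProduct_add, single_dotProduct,
      Pi.single_apply, huv, huv.symm]
  have hMuu : signlessLap G u u = G.degree u := by
    simp [signlessLap, SimpleGraph.degMatrix]
  have hMvv : signlessLap G v v = G.degree v := by
    simp [signlessLap, SimpleGraph.degMatrix]
  have hMuv : signlessLap G u v = 0 := by
    simp [signlessLap, SimpleGraph.degMatrix, Matrix.diagonal_apply_ne _ huv, hnadj]
  have hMvu : signlessLap G v u = 0 := by
    have : ¬ G.Adj v u := fun h => hnadj h.symm
    simp [signlessLap, SimpleGraph.degMatrix, Matrix.diagonal_apply_ne _ huv.symm, this]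
  have hquad : y ⬝ᵥ (signlessLap G *ᵥ y)
      = a * a * (G.degree u : ℝ) + b * b * (G.degree v : ℝ) := by
    rw [hy, Matrix.mulVec_add, Matrix.mulVec_single, Matrix.mulVec_single]
    simp only [add_dotProduct, dotProduct_add, single_dotProduct,
      Pi.add_apply, Pi.smul_apply, op_smul_eq_mul, Matrix.col_apply]
    rw [hMuu, hMvv, hMuv, hMvu]
    ring
  have hdu : (G.minDegree : ℝ) ≤ (G.degree u : ℝ) := Nat.cast_le.mpr (G.minDegree_le_degree u)
  have hdv : (G.minDegree : ℝ) ≤ (G.degree v : ℝ) := Nat.cast_le.mpr (G.minDegree_le_degree v)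
  have h1 : (G.minDegree : ℝ) * (a * a + b * b) ≤ y ⬝ᵥ (signlessLap G *ᵥ y) := by
    rw [hquad]
    nlinarith [mul_self_nonneg a, mul_self_nonneg b]
  have h2 : y ⬝ᵥ (signlessLap G *ᵥ y) ≤ q2 * (y ⬝ᵥ y) := quad_le_of_orth hM q2 w₀ hbound y hy0
  rw [hyy] at h2
  rw [hq]
  exact le_of_mul_le_mul_right (h1.trans h2) hpos
end

section
/- For every simple graph G, one has q₂(G) ≥ λ₂(G) + δ(G), where λ₂(G) is the second largest eigenvalue of the adjacency matrix of G and δ(G) is the minimum vertex degree of G. -/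
open Matrix SimpleGraph
open scoped Classical

/-! ### Auxiliary lemmas -/

lemma fin_le_rev_one {m : ℕ} (h : 1 < m) {j : Fin m}
    (hj : j ≠ Fin.rev ⟨0, by omega⟩) : j ≤ Fin.rev ⟨1, h⟩ := by
  have hlt := j.isLt
  rw [Fin.le_def, Fin.val_rev]
  rw [Fin.ne_iff_vne, Fin.val_rev] at hj
  simp only at hj ⊢
  omega

lemma exists_forall_le_sorted {m : ℕ} (f : Fin m → ℝ) (h : 1 < m) :
    ∃ i₀ : Fin m, ∀ i, i ≠ i₀ → f i ≤ (f ∘ Tuple.sort f) (Fin.rev ⟨1, h⟩) := by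
  refine ⟨Tuple.sort f (Fin.rev ⟨0, by omega⟩), fun i hi => ?_⟩
  have hj : (Tuple.sort f).symm i ≠ Fin.rev ⟨0, by omega⟩ := by
    intro hc
    exact hi (by rw [← hc, Equiv.apply_symm_apply])
  have := Tuple.monotone_sort f (fin_le_rev_one h hj)
  simpa using this

lemma exists_two_ge_sorted {m : ℕ} (f : Fin m → ℝ) (h : 1 < m) :
    ∃ i₁ i₂ : Fin m, i₁ ≠ i₂ ∧
      (f ∘ Tuple.sort f) (Fin.rev ⟨1, h⟩) ≤ f i₁ ∧
      (f ∘ Tuple.sort f) (Fin.rev ⟨1, h⟩) ≤ f i₂ := by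
  refine ⟨Tuple.sort f (Fin.rev ⟨0, by omega⟩), Tuple.sort f (Fin.rev ⟨1, h⟩), ?_, ?_, le_refl _⟩
  · simp only [ne_eq, EmbeddingLike.apply_eq_iff_eq]
    intro hc
    rw [Fin.ext_iff, Fin.val_rev, Fin.val_rev] at hc
    simp only at hc
    omega
  · exact Tuple.monotone_sort f (by rw [Fin.le_def, Fin.val_rev, Fin.val_rev]; simp; omega)

lemma kthEig_two_eq {V : Type*} [Fintype V] [DecidableEq V] {M : Matrix V V ℝ}
    (hM : M.IsHermitian) (h : 1 < Fintype.card V) :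
    kthEig M 2 = ((hM.eigenvalues ∘ (Fintype.equivFin V).symm) ∘
      Tuple.sort (hM.eigenvalues ∘ (Fintype.equivFin V).symm)) (Fin.rev ⟨1, h⟩) := by
  unfold kthEig
  rw [dif_pos hM, dif_pos (show 2 - 1 < Fintype.card V from h)]

lemma kthEig_junk {V : Type*} [Fintype V] [DecidableEq V] (M : Matrix V V ℝ)
    (h : ¬ 1 < Fintype.card V) : kthEig M 2 = 0 := by
  unfold kthEig
  by_cases h1 : M.IsHermitian
  · rw [dif_pos h1, dif_neg (show ¬ 2 - 1 < Fintype.card V by omega)]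
  · rw [dif_neg h1]

lemma isHermitian_adjMatrix' {n : ℕ} (G : SimpleGraph (Fin n)) [DecidableRel G.Adj] :
    (G.adjMatrix ℝ).IsHermitian := by
  rw [Matrix.IsHermitian, conjTranspose]
  ext i j
  simp [Matrix.transpose, Matrix.IsSymm.apply (isSymm_adjMatrix G), SimpleGraph.adj_comm]

lemma isHermitian_signlessLap {n : ℕ} (G : SimpleGraph (Fin n)) [DecidableRel G.Adj] :
    (signlessLap G).IsHermitian :=
  Matrix.IsHermitian.add (isHermitian_diagonal _) (isHermitian_adjMatrix' G)

/-- If `x` is a unit vector orthogonal to the `i₀`-th eigenvector and all eigenvalues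
except possibly the `i₀`-th are at most `c`, then the Rayleigh quotient of `x` is at most `c`. -/
lemma rayleigh_le {n : ℕ} {M : Matrix (Fin n) (Fin n) ℝ} (hM : M.IsHermitian)
    {i₀ : Fin n} {x : Fin n → ℝ} (hx : x ⬝ᵥ x = 1)
    (hperp : (⇑(hM.eigenvectorBasis i₀) : Fin n → ℝ) ⬝ᵥ x = 0)
    {c : ℝ} (hc : ∀ i, i ≠ i₀ → hM.eigenvalues i ≤ c) :
    x ⬝ᵥ (M *ᵥ x) ≤ c := by
  set U : Matrix (Fin n) (Fin n) ℝ := (hM.eigenvectorUnitary : Matrix (Fin n) (Fin n) ℝ) with hU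
  have hstar : star U = Uᵀ := by ext i j; simp [Matrix.star_apply]
  have hUUT : U * Uᵀ = 1 := by
    rw [← hstar]
    exact (Matrix.mem_unitaryGroup_iff).mp hM.eigenvectorUnitary.2
  set w : Fin n → ℝ := Uᵀ *ᵥ x with hw
  have hwvm : w = x ᵥ* U := Matrix.mulVec_transpose U x
  have hwi₀ : w i₀ = 0 := by
    rw [hw]
    show (Uᵀ *ᵥ x) i₀ = 0
    rw [← hperp]
    simp only [Matrix.mulVec, dotProduct, Matrix.transpose_apply, hU,
      Matrix.IsHermitian.eigenvectorUnitary_apply]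
  have hparseval : w ⬝ᵥ w = 1 := by
    rw [hwvm, ← Matrix.dotProduct_mulVec, ← hwvm, hw, Matrix.mulVec_mulVec, hUUT,
      Matrix.one_mulVec, hx]
  have hray : x ⬝ᵥ (M *ᵥ x) = ∑ i, hM.eigenvalues i * (w i * w i) := by
    conv_lhs => rw [hM.spectral_theorem, Unitary.conjStarAlgAut_apply, ← hU]
    rw [hstar, ← Matrix.mulVec_mulVec, ← Matrix.mulVec_mulVec, Matrix.dotProduct_mulVec,
      ← hwvm, ← hw]
    have hdiag : diagonal (RCLike.ofReal ∘ hM.eigenvalues) *ᵥ w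
        = fun i => hM.eigenvalues i * w i := by
      ext i
      rw [Matrix.mulVec_diagonal]
      simp [RCLike.ofReal_real_eq_id]
    rw [hdiag]
    simp only [dotProduct]
    congr 1
    ext i
    ring
  rw [hray]
  calc ∑ i, hM.eigenvalues i * (w i * w i) ≤ ∑ i, c * (w i * w i) := by
        apply Finset.sum_le_sum
        intro i _
        rcases eq_or_ne i i₀ with rfl | hi
        · rw [hwi₀]; ring_nf; exact le_refl _
        · exact mul_le_mul_of_nonneg_right (hc i hi) (mul_self_nonneg _)
    _ = c * (w ⬝ᵥ w) := by rw [dotProduct, Finset.mul_sum]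
    _ = c := by rw [hparseval, mul_one]

set_option maxHeartbeats 1000000 in
/-- For every graph `G`, `q₂(G) ≥ λ₂(G) + δ(G)`, where `λ₂(G)` is the second largest
adjacency eigenvalue and `δ(G)` the minimum degree. -/
theorem q2_ge_lambda2_add_minDegree (n : ℕ) (G : SimpleGraph (Fin n))
    [DecidableRel G.Adj] :
    kthEig (G.adjMatrix ℝ) 2 + (G.minDegree : ℝ) ≤ qEig G 2 := by
  by_cases hn : 1 < Fintype.card (Fin n)
  swap
  · -- trivial case `n ≤ 1`
    have hA0 := kthEig_junk (G.adjMatrix ℝ) hn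
    have hQ0 : qEig G 2 = 0 := kthEig_junk _ hn
    rw [hA0, hQ0]
    have hcard : n ≤ 1 := by simpa using hn
    have hδ : G.minDegree = 0 := by
      rcases Nat.lt_or_ge n 1 with h0 | h1
      · have : n = 0 := by omega
        subst this
        simp [SimpleGraph.minDegree, Finset.univ_eq_empty]
      · have hn1 : n = 1 := le_antisymm hcard h1
        subst hn1
        have h := G.minDegree_le_degree 0
        have hdeg : G.degree 0 = 0 := by
          rw [SimpleGraph.degree, Finset.card_eq_zero, Finset.eq_empty_iff_forall_notMem]
          intro u hu
          rw [SimpleGraph.mem_neighborFinset] at hu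
          exact G.irrefl (by rwa [Subsingleton.elim u 0] at hu)
        omega
    rw [hδ]
    norm_num
  -- main case
  have hA : (G.adjMatrix ℝ).IsHermitian := isHermitian_adjMatrix' G
  have hQ : (signlessLap G).IsHermitian := isHermitian_signlessLap G
  set e := Fintype.equivFin (Fin n) with he
  set fA : Fin (Fintype.card (Fin n)) → ℝ := hA.eigenvalues ∘ e.symm with hfA
  set fQ : Fin (Fintype.card (Fin n)) → ℝ := hQ.eigenvalues ∘ e.symm with hfQ
  obtain ⟨i₀', hle⟩ := exists_forall_le_sorted fQ hn
  obtain ⟨j₁', j₂', hne', hge1, hge2⟩ := exists_two_ge_sorted fA hn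
  have hlam : kthEig (G.adjMatrix ℝ) 2 = (fA ∘ Tuple.sort fA) (Fin.rev ⟨1, hn⟩) :=
    kthEig_two_eq hA hn
  have hq : qEig G 2 = (fQ ∘ Tuple.sort fQ) (Fin.rev ⟨1, hn⟩) := kthEig_two_eq hQ hn
  set i₀ : Fin n := e.symm i₀' with hi₀
  set j₁ : Fin n := e.symm j₁' with hj₁
  set j₂ : Fin n := e.symm j₂' with hj₂
  have hjne : j₁ ≠ j₂ := fun hc => hne' (e.symm.injective hc)
  have hAj1 : kthEig (G.adjMatrix ℝ) 2 ≤ hA.eigenvalues j₁ := by rw [hlam]; exact hge1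
  have hAj2 : kthEig (G.adjMatrix ℝ) 2 ≤ hA.eigenvalues j₂ := by rw [hlam]; exact hge2
  have hcQ : ∀ i, i ≠ i₀ → hQ.eigenvalues i ≤ qEig G 2 := by
    intro i hi
    rw [hq]
    have h' : e i ≠ i₀' := fun hc => hi (by rw [hi₀, ← hc, Equiv.symm_apply_apply])
    simpa [hfQ] using hle (e i) h'
  -- orthonormal eigenvectors of the adjacency matrix
  obtain ⟨y, z, hyy, hzz, hyz, hzy, hAy, hAz⟩ :
      ∃ y z : Fin n → ℝ, y ⬝ᵥ y = 1 ∧ z ⬝ᵥ z = 1 ∧ y ⬝ᵥ z = 0 ∧ z ⬝ᵥ y = 0 ∧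
        G.adjMatrix ℝ *ᵥ y = hA.eigenvalues j₁ • y ∧
        G.adjMatrix ℝ *ᵥ z = hA.eigenvalues j₂ • z := by
    have horth : ∀ i j : Fin n,
        (⇑(hA.eigenvectorBasis i) : Fin n → ℝ) ⬝ᵥ ⇑(hA.eigenvectorBasis j)
          = if i = j then 1 else 0 := by
      intro i j
      have h := orthonormal_iff_ite.mp hA.eigenvectorBasis.orthonormal i j
      simpa [PiLp.inner_apply, dotProduct, RCLike.inner_apply, starRingEnd_apply, mul_comm] using h
    refine ⟨⇑(hA.eigenvectorBasis j₁), ⇑(hA.eigenvectorBasis j₂), ?_, ?_, ?_, ?_,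
      hA.mulVec_eigenvectorBasis j₁, hA.mulVec_eigenvectorBasis j₂⟩
    · have h := horth j₁ j₁; rwa [if_pos rfl] at h
    · have h := horth j₂ j₂; rwa [if_pos rfl] at h
    · have h := horth j₁ j₂; rwa [if_neg hjne] at h
    · have h := horth j₂ j₁; rwa [if_neg hjne.symm] at h
  -- choose a combination orthogonal to the top eigenvector of the signless Laplacian
  set p : ℝ := (⇑(hQ.eigenvectorBasis i₀) : Fin n → ℝ) ⬝ᵥ y with hp
  set q : ℝ := (⇑(hQ.eigenvectorBasis i₀) : Fin n → ℝ) ⬝ᵥ z with hq'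
  obtain ⟨a, b, hab1, hab0⟩ : ∃ a b : ℝ, a ^ 2 + b ^ 2 = 1 ∧ a * p + b * q = 0 := by
    rcases eq_or_ne (Real.sqrt (p ^ 2 + q ^ 2)) 0 with h | h
    · have hpq : p ^ 2 + q ^ 2 ≤ 0 := Real.sqrt_eq_zero'.mp h
      have hp0 : p = 0 := by nlinarith [sq_nonneg p, sq_nonneg q]
      have hq0 : q = 0 := by nlinarith [sq_nonneg p, sq_nonneg q]
      exact ⟨1, 0, by norm_num, by rw [hp0, hq0]; ring⟩
    · refine ⟨q / Real.sqrt (p ^ 2 + q ^ 2), -p / Real.sqrt (p ^ 2 + q ^ 2), ?_, by ring⟩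
      have hpq0 : p ^ 2 + q ^ 2 ≠ 0 := fun hc => h (by rw [hc, Real.sqrt_zero])
      have hsq : Real.sqrt (p ^ 2 + q ^ 2) ^ 2 = p ^ 2 + q ^ 2 :=
        Real.sq_sqrt (by positivity)
      field_simp
      rw [add_comm (q ^ 2), hsq]
  set x : Fin n → ℝ := a • y + b • z with hx
  have hxx : x ⬝ᵥ x = 1 := by
    rw [hx]
    simp only [dotProduct_add, add_dotProduct, smul_dotProduct, dotProduct_smul,
      hyy, hzz, hyz, hzy, smul_eq_mul]
    nlinarith [hab1]
  have hperp : (⇑(hQ.eigenvectorBasis i₀) : Fin n → ℝ) ⬝ᵥ x = 0 := by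
    rw [hx]
    simp only [dotProduct_add, dotProduct_smul, ← hp, ← hq', smul_eq_mul]
    linarith [hab0]
  have hupper : x ⬝ᵥ (signlessLap G *ᵥ x) ≤ qEig G 2 := rayleigh_le hQ hxx hperp hcQ
  -- lower bound for the Rayleigh quotient
  have hAxval : x ⬝ᵥ (G.adjMatrix ℝ *ᵥ x)
      = a ^ 2 * hA.eigenvalues j₁ + b ^ 2 * hA.eigenvalues j₂ := by
    rw [hx, mulVec_add, mulVec_smul, mulVec_smul, hAy, hAz]
    simp only [dotProduct_add, add_dotProduct, smul_dotProduct, dotProduct_smul,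
      hyy, hzz, hyz, hzy, smul_eq_mul]
    ring
  have hAlower : kthEig (G.adjMatrix ℝ) 2 ≤ x ⬝ᵥ (G.adjMatrix ℝ *ᵥ x) := by
    rw [hAxval]
    have h1 : a ^ 2 * kthEig (G.adjMatrix ℝ) 2 ≤ a ^ 2 * hA.eigenvalues j₁ :=
      mul_le_mul_of_nonneg_left hAj1 (sq_nonneg a)
    have h2 : b ^ 2 * kthEig (G.adjMatrix ℝ) 2 ≤ b ^ 2 * hA.eigenvalues j₂ :=
      mul_le_mul_of_nonneg_left hAj2 (sq_nonneg b)
    have h3 : kthEig (G.adjMatrix ℝ) 2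
        = a ^ 2 * kthEig (G.adjMatrix ℝ) 2 + b ^ 2 * kthEig (G.adjMatrix ℝ) 2 := by
      rw [← add_mul, hab1, one_mul]
    linarith
  have hDlower : (G.minDegree : ℝ) ≤ x ⬝ᵥ (G.degMatrix ℝ *ᵥ x) := by
    have hDval : x ⬝ᵥ (G.degMatrix ℝ *ᵥ x) = ∑ v, (G.degree v : ℝ) * (x v * x v) := by
      simp only [dotProduct, degMatrix, Matrix.mulVec_diagonal]
      congr 1
      ext v
      ring
    rw [hDval]
    calc (G.minDegree : ℝ) = G.minDegree * (x ⬝ᵥ x) := by rw [hxx, mul_one]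
      _ = ∑ v, (G.minDegree : ℝ) * (x v * x v) := by
          rw [dotProduct, Finset.mul_sum]
      _ ≤ ∑ v, (G.degree v : ℝ) * (x v * x v) := by
          apply Finset.sum_le_sum
          intro v _
          exact mul_le_mul_of_nonneg_right
            (by exact_mod_cast G.minDegree_le_degree v) (mul_self_nonneg _)
  have hsplit : x ⬝ᵥ (signlessLap G *ᵥ x)
      = x ⬝ᵥ (G.degMatrix ℝ *ᵥ x) + x ⬝ᵥ (G.adjMatrix ℝ *ᵥ x) := by
    rw [signlessLap, Matrix.add_mulVec, dotProduct_add]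
  calc kthEig (G.adjMatrix ℝ) 2 + (G.minDegree : ℝ)
      ≤ x ⬝ᵥ (G.degMatrix ℝ *ᵥ x) + x ⬝ᵥ (G.adjMatrix ℝ *ᵥ x) := by linarith
    _ = x ⬝ᵥ (signlessLap G *ᵥ x) := hsplit.symm
    _ ≤ qEig G 2 := hupper
end

section
/- If G is a simple graph of order n ≥ 2 with q₂(G) = n − 2, then the smallest signless Laplacian eigenvalue of the complement of G is zero, i.e., qₙ(Ḡ) = 0, and consequently the complement of G has at least one bipartite component. -/
open Matrix SimpleGraph
open scoped Classical

section Aux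

variable {V : Type*} [Fintype V] [DecidableEq V] {M : Matrix V V ℝ}

lemma isHermitian_signlessLap_s7 (H : SimpleGraph V) [DecidableRel H.Adj] :
    (signlessLap H).IsHermitian := by
  rw [Matrix.IsHermitian, conjTranspose_eq_transpose_of_trivial]
  exact (SimpleGraph.isSymm_degMatrix (R := ℝ) (G := H)).add (SimpleGraph.isSymm_adjMatrix H)

lemma signlessLap_quad (H : SimpleGraph V) [DecidableRel H.Adj] (x : V → ℝ) :
    x ⬝ᵥ (signlessLap H *ᵥ x) =
      (∑ i : V, ∑ j : V, if H.Adj i j then (x i + x j)^2 else 0) / 2 := by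
  have h1 : x ⬝ᵥ (signlessLap H *ᵥ x)
      = ∑ i : V, ∑ j : V, if H.Adj i j then x i * x i + x i * x j else 0 := by
    simp_rw [signlessLap, add_mulVec, dotProduct_add, dotProduct_mulVec_degMatrix,
      dotProduct_mulVec_adjMatrix, degree_eq_sum_if_adj, Finset.sum_mul, ite_mul, one_mul,
      zero_mul, ← Finset.sum_add_distrib, ite_add_ite, add_zero]
  have h2 : x ⬝ᵥ (signlessLap H *ᵥ x)
      = ∑ i : V, ∑ j : V, if H.Adj i j then x j * x j + x i * x j else 0 := by
    rw [h1, Finset.sum_comm]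
    refine Finset.sum_congr rfl fun j _ => Finset.sum_congr rfl fun i _ => ?_
    by_cases hadj : H.Adj i j
    · rw [if_pos hadj, if_pos ((H.adj_comm i j).mp hadj)]; ring
    · rw [if_neg hadj, if_neg fun hc => hadj ((H.adj_comm i j).mpr hc)]
  rw [eq_div_iff (two_ne_zero' ℝ), mul_two]
  nth_rewrite 1 [h1]
  rw [h2, ← Finset.sum_add_distrib]
  refine Finset.sum_congr rfl fun i _ => ?_
  rw [← Finset.sum_add_distrib]
  refine Finset.sum_congr rfl fun j _ => ?_
  rw [ite_add_ite]
  by_cases hadj : H.Adj i j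
  · rw [if_pos hadj, if_pos hadj]; ring
  · rw [if_neg hadj, if_neg hadj]; ring

lemma signlessLap_quad_nonneg (H : SimpleGraph V) [DecidableRel H.Adj] (x : V → ℝ) :
    0 ≤ x ⬝ᵥ (signlessLap H *ᵥ x) := by
  rw [signlessLap_quad]
  have : ∀ i ∈ Finset.univ, (0:ℝ) ≤ ∑ j : V, if H.Adj i j then (x i + x j)^2 else 0 := by
    intro i _
    refine Finset.sum_nonneg fun j _ => ?_
    by_cases hadj : H.Adj i j <;> simp [hadj] <;> positivity
  have := Finset.sum_nonneg this
  linarith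

lemma kthEig_card_le (hM : M.IsHermitian) (h0 : 0 < Fintype.card V) (i : V) :
    kthEig M (Fintype.card V) ≤ hM.eigenvalues i := by
  have h1 : Fintype.card V - 1 < Fintype.card V := Nat.sub_lt h0 one_pos
  rw [kthEig, dif_pos hM, dif_pos h1]
  set f : Fin (Fintype.card V) → ℝ := hM.eigenvalues ∘ (Fintype.equivFin V).symm with hf
  have hrev : Fin.rev (⟨Fintype.card V - 1, h1⟩ : Fin (Fintype.card V)) = ⟨0, h0⟩ := by
    ext; simp only [Fin.val_rev]; omega
  rw [hrev]
  set j : Fin (Fintype.card V) := (Tuple.sort f).symm (Fintype.equivFin V i) with hj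
  have : (f ∘ Tuple.sort f) (⟨0, h0⟩) ≤ (f ∘ Tuple.sort f) j :=
    Tuple.monotone_sort f (by exact Fin.mk_le_of_le_val (Nat.zero_le _))
  refine this.trans_eq ?_
  simp [hj, hf]

lemma kthEig_card_mem (hM : M.IsHermitian) (h0 : 0 < Fintype.card V) :
    ∃ i : V, kthEig M (Fintype.card V) = hM.eigenvalues i := by
  have h1 : Fintype.card V - 1 < Fintype.card V := Nat.sub_lt h0 one_pos
  rw [kthEig, dif_pos hM, dif_pos h1]
  exact ⟨(Fintype.equivFin V).symm (Tuple.sort _ (Fin.rev ⟨Fintype.card V - 1, h1⟩)), rfl⟩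

lemma exists_pair_eigenvalues_ge (hM : M.IsHermitian) (h2 : 2 ≤ Fintype.card V) :
    ∃ i₁ i₂ : V, i₁ ≠ i₂ ∧ kthEig M 2 ≤ hM.eigenvalues i₁ ∧ kthEig M 2 ≤ hM.eigenvalues i₂ := by
  have h1 : 2 - 1 < Fintype.card V := lt_of_lt_of_le one_lt_two h2
  rw [kthEig, dif_pos hM, dif_pos h1]
  set f : Fin (Fintype.card V) → ℝ := hM.eigenvalues ∘ (Fintype.equivFin V).symm with hf
  have hn2 : Fintype.card V - 2 < Fintype.card V := Nat.sub_lt (by omega) two_pos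
  have hn1 : Fintype.card V - 1 < Fintype.card V := Nat.sub_lt (by omega) one_pos
  have hrev : Fin.rev (⟨2 - 1, h1⟩ : Fin (Fintype.card V)) = ⟨Fintype.card V - 2, hn2⟩ := by
    ext; simp only [Fin.val_rev]
  rw [hrev]
  set j₁ : Fin (Fintype.card V) := ⟨Fintype.card V - 2, hn2⟩
  set j₂ : Fin (Fintype.card V) := ⟨Fintype.card V - 1, hn1⟩
  have hjne : j₁ ≠ j₂ := by simp [j₁, j₂, Fin.ext_iff]; omega
  refine ⟨(Fintype.equivFin V).symm (Tuple.sort f j₁), (Fintype.equivFin V).symm (Tuple.sort f j₂),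
    ?_, le_of_eq rfl, ?_⟩
  · simp only [ne_eq, EmbeddingLike.apply_eq_iff_eq]
    exact fun hc => hjne hc
  · have : (f ∘ Tuple.sort f) j₁ ≤ (f ∘ Tuple.sort f) j₂ :=
      Tuple.monotone_sort f (by simp [j₁, j₂, Fin.mk_le_mk]; omega)
    exact this

/-- the eigenvector of a real symmetric matrix, as a plain function -/
noncomputable def evec (hM : M.IsHermitian) (i : V) : V → ℝ :=
  (WithLp.equiv 2 (V → ℝ)) (hM.eigenvectorBasis i)

lemma eigenbasis_dot (hM : M.IsHermitian) (i j : V) :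
    evec hM i ⬝ᵥ evec hM j = if i = j then 1 else 0 := by
  have h := orthonormal_iff_ite.mp hM.eigenvectorBasis.orthonormal i j
  rw [← h]
  simp [evec, PiLp.inner_apply, dotProduct, RCLike.inner_apply, mul_comm]

lemma mulVec_evec (hM : M.IsHermitian) (i : V) :
    M *ᵥ evec hM i = hM.eigenvalues i • evec hM i := hM.mulVec_eigenvectorBasis i

lemma eigenvalue_rayleigh (hM : M.IsHermitian) (i : V) :
    evec hM i ⬝ᵥ (M *ᵥ evec hM i) = hM.eigenvalues i := by
  rw [mulVec_evec, dotProduct_smul, smul_eq_mul, eigenbasis_dot hM i i, if_pos rfl, mul_one]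

lemma signlessLap_add_compl (G : SimpleGraph V) [DecidableRel G.Adj] [DecidableRel Gᶜ.Adj] :
    signlessLap G + signlessLap Gᶜ
      = ((Fintype.card V : ℝ) - 2) • (1 : Matrix V V ℝ) + Matrix.of (fun _ _ => (1:ℝ)) := by
  ext u v
  by_cases huv : u = v
  · subst huv
    have hd : G.degree u < Fintype.card V := G.degree_lt_card_verts u
    simp only [signlessLap, Matrix.add_apply, SimpleGraph.degMatrix, Matrix.diagonal_apply_eq,
      SimpleGraph.adjMatrix_apply, Matrix.smul_apply, Matrix.one_apply_eq, Matrix.of_apply,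
      smul_eq_mul, mul_one, if_neg (G.irrefl), if_neg (Gᶜ.irrefl), add_zero]
    rw [SimpleGraph.degree_compl, Nat.cast_sub (by omega), Nat.cast_sub (by omega)]
    push_cast
    ring
  · simp only [signlessLap, Matrix.add_apply, SimpleGraph.degMatrix,
      Matrix.diagonal_apply_ne _ huv, SimpleGraph.adjMatrix_apply, Matrix.smul_apply,
      Matrix.one_apply_ne huv, Matrix.of_apply, smul_eq_mul, mul_zero, zero_add,
      SimpleGraph.compl_adj]
    by_cases hadj : G.Adj u v
    · rw [if_pos hadj, if_neg (by tauto)]; norm_num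
    · rw [if_neg hadj, if_pos ⟨huv, hadj⟩]; norm_num

lemma dot_smul_one_mulVec (c : ℝ) (x : V → ℝ) :
    x ⬝ᵥ ((c • (1 : Matrix V V ℝ)) *ᵥ x) = c * (x ⬝ᵥ x) := by
  rw [smul_mulVec, one_mulVec, dotProduct_smul, smul_eq_mul]

lemma dot_allOnes_mulVec (x : V → ℝ) :
    x ⬝ᵥ ((Matrix.of (fun _ _ => (1:ℝ)) : Matrix V V ℝ) *ᵥ x) = (∑ v, x v)^2 := by
  simp only [mulVec, dotProduct, Matrix.of_apply, one_mul]
  rw [← Finset.sum_mul, sq]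

end Aux

/-- If `G` is a graph of order `n ≥ 2` with `q₂(G) = n - 2`, then `q_n(Ḡ) = 0` and the
complement of `G` has a bipartite component. -/
theorem qn_compl_eq_zero_of_q2 (n : ℕ) (hn : 2 ≤ n)
    (G : SimpleGraph (Fin n)) [DecidableRel G.Adj]
    (h : qEig G 2 = (n : ℝ) - 2) :
    qEig Gᶜ n = 0 ∧ ∃ c : Gᶜ.ConnectedComponent, IsBipartiteComponent Gᶜ c := by
  have hcard : Fintype.card (Fin n) = n := Fintype.card_fin n
  have hM : (signlessLap G).IsHermitian := isHermitian_signlessLap_s7 G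
  have hN : (signlessLap Gᶜ).IsHermitian := isHermitian_signlessLap_s7 Gᶜ
  -- two eigenvalues of `Q(G)` that are `≥ n - 2`
  obtain ⟨i₁, i₂, hne, hl1, hl2⟩ := exists_pair_eigenvalues_ge hM (by omega)
  rw [show kthEig (signlessLap G) 2 = qEig G 2 from rfl, h] at hl1 hl2
  set u₁ : Fin n → ℝ := evec hM i₁ with hu₁
  set u₂ : Fin n → ℝ := evec hM i₂ with hu₂
  set s₁ : ℝ := ∑ v, u₁ v with hs₁
  set s₂ : ℝ := ∑ v, u₂ v with hs₂
  obtain ⟨a, b, hab, habs⟩ : ∃ a b : ℝ, ¬(a = 0 ∧ b = 0) ∧ a * s₁ + b * s₂ = 0 := by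
    by_cases hs : s₁ = 0
    · exact ⟨1, 0, by norm_num, by simp [hs]⟩
    · exact ⟨s₂, -s₁, fun hc => hs (neg_eq_zero.mp hc.2), by ring⟩
  set x : Fin n → ℝ := a • u₁ + b • u₂ with hx
  have hd11 : u₁ ⬝ᵥ u₁ = 1 := by rw [hu₁, eigenbasis_dot hM i₁ i₁, if_pos rfl]
  have hd22 : u₂ ⬝ᵥ u₂ = 1 := by rw [hu₂, eigenbasis_dot hM i₂ i₂, if_pos rfl]
  have hd12 : u₁ ⬝ᵥ u₂ = 0 := by rw [hu₁, hu₂, eigenbasis_dot hM i₁ i₂, if_neg hne]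
  have hd21 : u₂ ⬝ᵥ u₁ = 0 := by rw [hu₁, hu₂, eigenbasis_dot hM i₂ i₁, if_neg (Ne.symm hne)]
  have hxx : x ⬝ᵥ x = a^2 + b^2 := by
    simp only [hx, add_dotProduct, dotProduct_add, smul_dotProduct, dotProduct_smul,
      hd11, hd22, hd12, hd21, smul_eq_mul]
    ring
  have hxMx : x ⬝ᵥ (signlessLap G *ᵥ x)
      = a^2 * hM.eigenvalues i₁ + b^2 * hM.eigenvalues i₂ := by
    have hmv : signlessLap G *ᵥ x
        = (a * hM.eigenvalues i₁) • u₁ + (b * hM.eigenvalues i₂) • u₂ := by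
      rw [hx, mulVec_add, mulVec_smul, mulVec_smul, hu₁, hu₂, mulVec_evec, mulVec_evec,
        smul_smul, smul_smul]
    rw [hmv]
    simp only [hx, add_dotProduct, dotProduct_add, smul_dotProduct, dotProduct_smul,
      hd11, hd22, hd12, hd21, smul_eq_mul]
    ring
  have hsumx : ∑ v, x v = 0 := by
    simp only [hx, Pi.add_apply, Pi.smul_apply, smul_eq_mul, Finset.sum_add_distrib,
      ← Finset.mul_sum, ← hs₁, ← hs₂]
    exact habs
  -- the quadratic form of `Q(Gᶜ)` at `x` is nonpositive
  have hkey : x ⬝ᵥ (signlessLap Gᶜ *ᵥ x) ≤ 0 := by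
    have hMN := congrArg (fun P : Matrix (Fin n) (Fin n) ℝ => x ⬝ᵥ (P *ᵥ x))
      (signlessLap_add_compl G)
    simp only [add_mulVec, dotProduct_add, dot_smul_one_mulVec, dot_allOnes_mulVec,
      hcard] at hMN
    rw [hsumx, hxx, hxMx] at hMN
    norm_num at hMN
    nlinarith [hMN, mul_nonneg (sq_nonneg a) (sub_nonneg.mpr hl1),
      mul_nonneg (sq_nonneg b) (sub_nonneg.mpr hl2)]
  -- hence every edge of `Gᶜ` satisfies `x v = - x u`
  have hedge : ∀ u v : Fin n, Gᶜ.Adj u v → x v = - x u := by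
    have hq := signlessLap_quad Gᶜ x
    have hge := signlessLap_quad_nonneg Gᶜ x
    have hsum0 : (∑ i : Fin n, ∑ j : Fin n, if Gᶜ.Adj i j then (x i + x j)^2 else 0) = 0 := by
      rw [hq] at hkey hge
      linarith
    intro u v hadj
    have hterm : ∀ i ∈ Finset.univ, ∀ j ∈ Finset.univ,
        (0:ℝ) ≤ if Gᶜ.Adj i j then (x i + x j)^2 else 0 := by
      intro i _ j _
      by_cases hadj' : Gᶜ.Adj i j <;> simp [hadj'] <;> positivity
    have h1 := (Finset.sum_eq_zero_iff_of_nonneg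
      (fun i _ => Finset.sum_nonneg (hterm i (Finset.mem_univ i)))).mp hsum0 u (Finset.mem_univ u)
    have h2 := (Finset.sum_eq_zero_iff_of_nonneg (hterm u (Finset.mem_univ u))).mp h1 v
      (Finset.mem_univ v)
    rw [if_pos hadj] at h2
    have := pow_eq_zero_iff (n := 2) (by norm_num) |>.mp h2
    linarith
  -- `x` is nonzero
  have hxne : ∃ v0, x v0 ≠ 0 := by
    by_contra hc
    push_neg at hc
    have : x ⬝ᵥ x = 0 := by
      simp only [dotProduct]
      exact Finset.sum_eq_zero fun v _ => by rw [hc v, mul_zero]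
    rw [hxx] at this
    rcases not_and_or.mp hab with ha | hb
    · nlinarith [sq_nonneg a, sq_nonneg b, sq_pos_of_ne_zero ha]
    · nlinarith [sq_nonneg a, sq_nonneg b, sq_pos_of_ne_zero hb]
  obtain ⟨v0, hv0⟩ := hxne
  -- `x` is in the kernel of `Q(Gᶜ)`
  have hNx : signlessLap Gᶜ *ᵥ x = 0 := by
    funext u
    have : (signlessLap Gᶜ *ᵥ x) u = Gᶜ.degree u * x u + ∑ w ∈ Gᶜ.neighborFinset u, x w := by
      simp [signlessLap, add_mulVec, SimpleGraph.degMatrix_mulVec_apply,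
        SimpleGraph.adjMatrix_mulVec_apply]
    rw [this]
    have hsum : ∑ w ∈ Gᶜ.neighborFinset u, x w = ∑ w ∈ Gᶜ.neighborFinset u, (- x u) :=
      Finset.sum_congr rfl fun w hw => hedge u w ((Gᶜ.mem_neighborFinset u w).mp hw)
    rw [hsum, Finset.sum_const, SimpleGraph.card_neighborFinset_eq_degree]
    simp only [nsmul_eq_mul, Pi.zero_apply]
    ring
  -- all eigenvalues of `Q(Gᶜ)` are nonnegative
  have hNnonneg : ∀ i, 0 ≤ hN.eigenvalues i := by
    intro i
    rw [← eigenvalue_rayleigh hN i]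
    exact signlessLap_quad_nonneg Gᶜ (evec hN i)
  -- `Q(Gᶜ)` is singular, so it has a zero eigenvalue
  have hdet : (signlessLap Gᶜ).det = 0 :=
    Matrix.exists_mulVec_eq_zero_iff.mp ⟨x, fun hc => hv0 (by rw [hc]; rfl), hNx⟩
  have hzero : ∃ i, hN.eigenvalues i = 0 := by
    have := hN.det_eq_prod_eigenvalues
    rw [hdet] at this
    have hprod : (∏ i, hN.eigenvalues i) = 0 := by
      exact_mod_cast this.symm
    obtain ⟨i, _, hi⟩ := Finset.prod_eq_zero_iff.mp hprod
    exact ⟨i, hi⟩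
  obtain ⟨i0, hi0⟩ := hzero
  have hq0 : qEig Gᶜ n = 0 := by
    have hle : kthEig (signlessLap Gᶜ) (Fintype.card (Fin n)) ≤ 0 := by
      rw [← hi0]
      exact kthEig_card_le hN (by omega) i0
    obtain ⟨i, hi⟩ := kthEig_card_mem hN (show 0 < Fintype.card (Fin n) by omega)
    have hge : 0 ≤ kthEig (signlessLap Gᶜ) (Fintype.card (Fin n)) := hi ▸ hNnonneg i
    have : kthEig (signlessLap Gᶜ) (Fintype.card (Fin n)) = 0 := le_antisymm hle hge
    rw [hcard] at this
    exact this
  refine ⟨hq0, ?_⟩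
  -- the component of `v0` in `Gᶜ` is bipartite
  have hreach : ∀ u w : Fin n, Gᶜ.Reachable u w → x u = x w ∨ x u = - x w := by
    intro u w hr
    obtain ⟨p⟩ := hr
    induction p with
    | nil => exact Or.inl rfl
    | cons hadj p ih =>
      have h1 := hedge _ _ hadj
      rcases ih with h2 | h2
      · right; linarith
      · left; linarith
  set c : Gᶜ.ConnectedComponent := Gᶜ.connectedComponentMk v0 with hc
  refine ⟨c, {u | u ∈ c.supp ∧ x u = x v0}, {u | u ∈ c.supp ∧ x u = - x v0}, ?_, ?_, ?_⟩
  · ext u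
    simp only [Set.mem_union, Set.mem_setOf_eq]
    constructor
    · rintro (⟨hu, _⟩ | ⟨hu, _⟩) <;> exact hu
    · intro hu
      have hr : Gᶜ.Reachable u v0 := by
        rw [SimpleGraph.ConnectedComponent.mem_supp_iff, hc] at hu
        exact (SimpleGraph.ConnectedComponent.eq).mp hu
      rcases hreach u v0 hr with h1 | h1
      · exact Or.inl ⟨hu, h1⟩
      · exact Or.inr ⟨hu, h1⟩
  · rw [Set.disjoint_left]
    rintro u ⟨_, h1⟩ ⟨_, h2⟩
    rw [h1] at h2
    apply hv0
    linarith
  · intro u v hu hadj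
    have hv : v ∈ c.supp := by
      rw [SimpleGraph.ConnectedComponent.mem_supp_iff] at hu ⊢
      rw [SimpleGraph.ConnectedComponent.connectedComponentMk_eq_of_adj hadj.symm, hu]
    have hxv : x v = - x u := hedge u v hadj
    have hu' : u ∈ c.supp := hu
    rcases hreach u v0 (by
      rw [SimpleGraph.ConnectedComponent.mem_supp_iff, hc] at hu'
      exact (SimpleGraph.ConnectedComponent.eq).mp hu') with h1 | h1
    · left
      exact ⟨⟨hu, h1⟩, ⟨hv, by rw [hxv, h1]⟩⟩
    · right
      exact ⟨⟨hu, h1⟩, ⟨hv, by rw [hxv, h1]; ring⟩⟩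
end
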